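/- Let n ≥ 1 and consider n nondegenerate segments in the Euclidean plane, the i-th segment being sᵢ = [uᵢ, wᵢ] with uᵢ ≠ wᵢ, such that the finite set of all endpoints {uᵢ, wᵢ : i} contains no three collinear points. Call two distinct segments adjacent if they share an endpoint, and for each i let dᵢ be the number of segments j ≠ i adjacent to segment i. Then the set of crossing points — points of the plane lying on two distinct non-adjacent segments — is finite, and twice its cardinality is at most Σᵢ (n − 1 − dᵢ). -/

import Mathlib

open Set

private lemma seg_subset_line {a b p : EuclideanSpace ℝ (Fin 2)}
    (hp : p ∈ segment ℝ a b) : p ∈ line[ℝ, a, b] :=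
  (AffineSubspace.convex _).segment_subset (left_mem_affineSpan_pair ℝ a b)
    (right_mem_affineSpan_pair ℝ a b) hp

private lemma unique_cross (n : ℕ)
    (u w : Fin n → EuclideanSpace ℝ (Fin 2))
    (hnd : ∀ i, u i ≠ w i)
    (hcol : ∀ p q r : EuclideanSpace ℝ (Fin 2),
      p ∈ Set.range u ∪ Set.range w → q ∈ Set.range u ∪ Set.range w →
      r ∈ Set.range u ∪ Set.range w → p ≠ q → q ≠ r → p ≠ r →
      ¬ Collinear ℝ ({p, q, r} : Set (EuclideanSpace ℝ (Fin 2))))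
    (i j : Fin n)
    (hadj : ¬ (u i = u j ∨ u i = w j ∨ w i = u j ∨ w i = w j))
    {p q : EuclideanSpace ℝ (Fin 2)}
    (hp1 : p ∈ segment ℝ (u i) (w i)) (hp2 : p ∈ segment ℝ (u j) (w j))
    (hq1 : q ∈ segment ℝ (u i) (w i)) (hq2 : q ∈ segment ℝ (u j) (w j)) :
    p = q := by
  push_neg at hadj
  obtain ⟨h1, h2, h3, h4⟩ := hadj
  by_contra hpq
  have c1 : Collinear ℝ {p, q, u i, w i} :=
    collinear_insert_insert_of_mem_affineSpan_pair (seg_subset_line hp1) (seg_subset_line hq1)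
  have c2 : Collinear ℝ {p, q, u j, w j} :=
    collinear_insert_insert_of_mem_affineSpan_pair (seg_subset_line hp2) (seg_subset_line hq2)
  have hui : u i ∈ line[ℝ, p, q] :=
    c1.mem_affineSpan_of_mem_of_ne (by simp) (by simp) (by simp) hpq
  have hwi : w i ∈ line[ℝ, p, q] :=
    c1.mem_affineSpan_of_mem_of_ne (by simp) (by simp) (by simp) hpq
  have huj : u j ∈ line[ℝ, p, q] :=
    c2.mem_affineSpan_of_mem_of_ne (by simp) (by simp) (by simp) hpq
  have : Collinear ℝ {u i, w i, u j} := by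
    have := collinear_insert_insert_insert_of_mem_affineSpan_pair hui hwi huj
    exact this.subset (by intro x hx; simp at hx ⊢; tauto)
  exact hcol (u i) (w i) (u j) (Or.inl ⟨i, rfl⟩) (Or.inr ⟨i, rfl⟩) (Or.inl ⟨j, rfl⟩)
    (hnd i) h3 h1 this

set_option maxHeartbeats 2000000 in
/-- For `n ≥ 1` nondegenerate segments in the plane whose endpoint set contains no three
collinear points, with `dᵢ` the number of other segments adjacent to (sharing an endpoint
with) the `i`-th segment, the set of crossing points of pairs of distinct non-adjacent
segments is finite and twice its cardinality is at most `Σᵢ (n - 1 - dᵢ)`. -/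
theorem crossing_points_le_sum (n : ℕ) (hn : 1 ≤ n)
    (u w : Fin n → EuclideanSpace ℝ (Fin 2))
    (hnd : ∀ i, u i ≠ w i)
    (hcol : ∀ p q r : EuclideanSpace ℝ (Fin 2),
      p ∈ Set.range u ∪ Set.range w → q ∈ Set.range u ∪ Set.range w →
      r ∈ Set.range u ∪ Set.range w → p ≠ q → q ≠ r → p ≠ r →
      ¬ Collinear ℝ ({p, q, r} : Set (EuclideanSpace ℝ (Fin 2)))) :
    ({p : EuclideanSpace ℝ (Fin 2) | ∃ i j : Fin n, i ≠ j ∧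
        ¬ (u i = u j ∨ u i = w j ∨ w i = u j ∨ w i = w j) ∧
        p ∈ segment ℝ (u i) (w i) ∧ p ∈ segment ℝ (u j) (w j)}).Finite ∧
    2 * ({p : EuclideanSpace ℝ (Fin 2) | ∃ i j : Fin n, i ≠ j ∧
        ¬ (u i = u j ∨ u i = w j ∨ w i = u j ∨ w i = w j) ∧
        p ∈ segment ℝ (u i) (w i) ∧ p ∈ segment ℝ (u j) (w j)}).ncard
      ≤ ∑ i : Fin n, (n - 1 -
        ({j : Fin n | j ≠ i ∧
          (u i = u j ∨ u i = w j ∨ w i = u j ∨ w i = w j)}).ncard) := by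
  classical
  set adj : Fin n → Fin n → Prop :=
    fun i j => u i = u j ∨ u i = w j ∨ w i = u j ∨ w i = w j with hadjdef
  have adj_symm : ∀ i j, adj i j → adj j i := by
    intro i j h
    rcases h with h | h | h | h
    · exact Or.inl h.symm
    · exact Or.inr (Or.inr (Or.inl h.symm))
    · exact Or.inr (Or.inl h.symm)
    · exact Or.inr (Or.inr (Or.inr h.symm))
  set S : Set (EuclideanSpace ℝ (Fin 2)) := {p : EuclideanSpace ℝ (Fin 2) | ∃ i j : Fin n, i ≠ j ∧ ¬ adj i j ∧
      p ∈ segment ℝ (u i) (w i) ∧ p ∈ segment ℝ (u j) (w j)} with hSdef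
  -- ordered witnesses
  have hex : ∀ p ∈ S, ∃ q : Fin n × Fin n, q.1 < q.2 ∧ ¬ adj q.1 q.2 ∧
      p ∈ segment ℝ (u q.1) (w q.1) ∧ p ∈ segment ℝ (u q.2) (w q.2) := by
    intro p hp
    obtain ⟨i, j, hij, hnadj, hpi, hpj⟩ := hp
    rcases lt_or_gt_of_ne hij with h | h
    · exact ⟨(i, j), h, hnadj, hpi, hpj⟩
    · exact ⟨(j, i), h, fun ha => hnadj (adj_symm _ _ ha), hpj, hpi⟩
  set c : EuclideanSpace ℝ (Fin 2) → Fin n × Fin n := fun p =>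
    if h : ∃ q : Fin n × Fin n, q.1 < q.2 ∧ ¬ adj q.1 q.2 ∧
        p ∈ segment ℝ (u q.1) (w q.1) ∧ p ∈ segment ℝ (u q.2) (w q.2)
    then h.choose else (⟨0, hn⟩, ⟨0, hn⟩) with hcdef
  have hc : ∀ p ∈ S, (c p).1 < (c p).2 ∧ ¬ adj (c p).1 (c p).2 ∧
      p ∈ segment ℝ (u (c p).1) (w (c p).1) ∧ p ∈ segment ℝ (u (c p).2) (w (c p).2) := by
    intro p hp
    have h := hex p hp
    simp only [hcdef, dif_pos h]
    exact h.choose_spec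
  have hinj : Set.InjOn c S := by
    intro p hp q hq hpq
    obtain ⟨_, hna, hp1, hp2⟩ := hc p hp
    obtain ⟨_, _, hq1, hq2⟩ := hc q hq
    rw [hpq] at hp1 hp2 hna
    exact unique_cross n u w hnd hcol _ _ hna hp1 hp2 hq1 hq2
  have hfin : S.Finite := Set.Finite.of_finite_image (Set.toFinite _) hinj
  refine ⟨hfin, ?_⟩
  -- the finset of nonadjacent ordered pairs
  set PF : Finset (Fin n × Fin n) :=
    Finset.univ.filter (fun q : Fin n × Fin n => q.1 ≠ q.2 ∧ ¬ adj q.1 q.2) with hPFdef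
  -- step 1: RHS equals PF.card
  have step1 : ∑ i : Fin n, (n - 1 -
      ({j : Fin n | j ≠ i ∧ adj i j}).ncard) = PF.card := by
    rw [Finset.card_eq_sum_card_fiberwise (f := Prod.fst) (t := Finset.univ)
      (fun x _ => Finset.mem_univ _)]
    apply Finset.sum_congr rfl
    intro i _
    have hsplit : ({j : Fin n | j ≠ i ∧ adj i j}).ncard
        + ({j : Fin n | j ≠ i ∧ ¬ adj i j}).ncard = n - 1 := by
      rw [← Set.ncard_union_eq (by
          rw [Set.disjoint_left]; rintro j ⟨_, h⟩ ⟨_, h'⟩; exact h' h)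
        (Set.toFinite _) (Set.toFinite _)]
      have : ({j : Fin n | j ≠ i ∧ adj i j} ∪ {j : Fin n | j ≠ i ∧ ¬ adj i j})
          = {i}ᶜ := by
        ext j; simp [Set.mem_compl_iff]; tauto
      rw [this, Set.ncard_eq_toFinset_card']
      simp [Finset.card_compl]
    have hcard2 : ({j : Fin n | j ≠ i ∧ ¬ adj i j}).ncard
        = (Finset.filter (fun q : Fin n × Fin n => q.1 = i) PF).card := by
      rw [show {j : Fin n | j ≠ i ∧ ¬ adj i j}
          = ↑(Finset.univ.filter (fun j => j ≠ i ∧ ¬ adj i j)) by ext j; simp]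
      rw [Set.ncard_coe_finset]
      apply Finset.card_bij' (fun j _ => ((i, j) : Fin n × Fin n)) (fun q _ => q.2)
      · intro j hj
        simp only [hPFdef, Finset.mem_filter, Finset.mem_univ, true_and] at hj ⊢
        exact ⟨⟨Ne.symm hj.1, hj.2⟩, trivial⟩
      · intro q hq
        simp only [hPFdef, Finset.mem_filter, Finset.mem_univ, true_and] at hq ⊢
        obtain ⟨⟨hne, hna⟩, h1⟩ := hq
        rw [← h1]
        exact ⟨Ne.symm hne, hna⟩
      · intro j hj; rfl
      · intro q hq
        simp only [hPFdef, Finset.mem_filter] at hq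
        exact Prod.ext hq.2.symm rfl
    omega
  have hgoal : ∑ i : Fin n, (n - 1 -
      ({j : Fin n | j ≠ i ∧ (u i = u j ∨ u i = w j ∨ w i = u j ∨ w i = w j)}).ncard)
      = ∑ i : Fin n, (n - 1 - ({j : Fin n | j ≠ i ∧ adj i j}).ncard) := rfl
  rw [hgoal, step1]
  -- step 2: injection from Bool × S into PF
  have hSc : S.ncard = hfin.toFinset.card := (Set.ncard_eq_toFinset_card S hfin)
  have hdom : ((Finset.univ : Finset Bool) ×ˢ hfin.toFinset).card = 2 * S.ncard := by
    rw [Finset.card_product, hSc]; simp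
  rw [← hdom]
  apply Finset.card_le_card_of_injOn
    (fun bp : Bool × EuclideanSpace ℝ (Fin 2) => bif bp.1 then c bp.2 else (c bp.2).swap)
  · rintro ⟨b, p⟩ hbp
    simp only [Finset.mem_coe, Finset.mem_product, Set.Finite.mem_toFinset] at hbp
    obtain ⟨hlt, hna, _, _⟩ := hc p hbp.2
    cases b
    · simp only [Finset.mem_coe, Bool.cond_false, hPFdef, Finset.mem_filter, Finset.mem_univ,
        true_and, Prod.fst_swap, Prod.snd_swap]
      exact ⟨Ne.symm (ne_of_lt hlt), fun h => hna (adj_symm _ _ h)⟩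
    · simp only [Finset.mem_coe, Bool.cond_true, hPFdef, Finset.mem_filter, Finset.mem_univ, true_and]
      exact ⟨ne_of_lt hlt, hna⟩
  · rintro ⟨b, p⟩ hbp ⟨b', p'⟩ hbp' heq
    simp only [Finset.coe_product, Set.mem_prod, Set.Finite.coe_toFinset] at hbp hbp'
    have hp := (hc p hbp.2).1
    have hp' := (hc p' hbp'.2).1
    have hpp : c p = c p' → p = p' := fun h => hinj hbp.2 hbp'.2 h
    cases b <;> cases b' <;>
      simp only [Bool.cond_true, Bool.cond_false] at heq
    · exact Prod.ext rfl (hpp (Prod.swap_injective heq))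
    · exfalso
      have h1 : (c p).2 = (c p').1 := congrArg Prod.fst heq
      have h2 : (c p).1 = (c p').2 := congrArg Prod.snd heq
      rw [← h1, ← h2] at hp'
      exact lt_asymm hp hp'
    · exfalso
      have h1 : (c p).1 = (c p').2 := congrArg Prod.fst heq
      have h2 : (c p).2 = (c p').1 := congrArg Prod.snd heq
      rw [h1, h2] at hp
      exact lt_asymm hp hp'
    · exact Prod.ext rfl (hpp heq)
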